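/- arXiv:2212.08618 — 3 statements merged into one kernel-verified Lean document; each statement's English description precedes it below -/
import Mathlib

section
/- Let μ be a Radon measure on ℝⁿ and A_μ = {x ∈ supp(μ) : limsup_{r→0⁺} μ(B_r(x))/μ(B_{2r}(x)) ≥ 2^{−n}}. Then μ(ℝⁿ \ A_μ) = 0; i.e., every Radon measure is asymptotically doubling in this weak sense μ-almost everywhere. -/
open MeasureTheory Filter Metric Set
open scoped ENNReal NNReal Topology

/-- If `x` is in the support of `μ` and the limsup of `μ(B_r)/μ(B_{2r})` as `r → 0⁺` is smaller
than `2⁻ⁿ`, then `μ (closedBall x r)` is eventually smaller than any fixed multiple of the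
Lebesgue measure of the ball: iterating the "anti-doubling" inequality shows that
`μ (closedBall x r)` decays like `r^{n+δ}` for some `δ > 0`. -/
lemma aux_small_density {n : ℕ} (μ : Measure (EuclideanSpace ℝ (Fin n)))
    [IsLocallyFiniteMeasure μ] (x : EuclideanSpace ℝ (Fin n))
    (hpos : ∀ r : ℝ, 0 < r → 0 < μ (Metric.ball x r))
    (hlt : Filter.limsup (fun r : ℝ => μ (Metric.ball x r) / μ (Metric.ball x (2 * r)))
      (𝓝[>] (0 : ℝ)) < ((2 : ℝ≥0∞) ^ n)⁻¹)
    (ε : ℝ≥0∞) (hε : 0 < ε) :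
    ∀ᶠ r in 𝓝[>] (0 : ℝ), μ (Metric.closedBall x r) ≤ ε * volume (Metric.closedBall x r) := by
  obtain ⟨c, hc1, hc2⟩ := exists_between hlt
  have hev : ∀ᶠ r in 𝓝[>] (0 : ℝ),
      μ (Metric.ball x r) / μ (Metric.ball x (2 * r)) < c :=
    eventually_lt_of_limsup_lt hc1
  obtain ⟨s, hs_mem, hs_fin⟩ := (μ.finiteAt_nhds x).exists_mem_basis (nhds_basis_ball (x := x))
  have hfin : ∀ᶠ r in 𝓝[>] (0 : ℝ), μ (Metric.ball x (2 * r)) < ∞ := by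
    filter_upwards [Ioo_mem_nhdsGT_of_mem ⟨le_refl (0:ℝ), half_pos hs_mem⟩] with r hr
    refine lt_of_le_of_lt (measure_mono (Metric.ball_subset_ball ?_)) hs_fin
    nlinarith [hr.1, hr.2]
  obtain ⟨r₀, hr₀', H'⟩ := mem_nhdsGT_iff_exists_Ioo_subset.1 (hev.and hfin)
  have hr₀ : 0 < r₀ := hr₀'
  have H : ∀ r : ℝ, 0 < r → r < r₀ →
      μ (Metric.ball x r) ≤ c * μ (Metric.ball x (2 * r)) ∧ μ (Metric.ball x (2 * r)) < ∞ := by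
    intro r h1 h2
    have := H' (⟨h1, h2⟩ : r ∈ Ioo 0 r₀)
    exact ⟨(ENNReal.div_le_iff (hpos _ (by positivity)).ne' this.2.ne).1 this.1.le, this.2⟩
  -- iterated anti-doubling estimate
  have iter : ∀ k : ℕ, ∀ r : ℝ, 0 < r → 2 ^ k * r ≤ r₀ →
      μ (Metric.ball x r) ≤ c ^ k * μ (Metric.ball x (2 ^ k * r)) := by
    intro k
    induction k with
    | zero => intro r hr _; simp
    | succ k ih =>
      intro r hr hle
      have hp : (1:ℝ) ≤ 2 ^ k := one_le_pow₀ (by norm_num)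
      have he : (2:ℝ) ^ (k+1) = 2 * 2 ^ k := by ring
      have h1 : r < r₀ := by nlinarith
      have h2 : 2 ^ k * (2 * r) ≤ r₀ := by
        have : (2:ℝ) ^ k * (2*r) = 2 ^ (k+1) * r := by ring
        linarith [this ▸ hle]
      calc μ (Metric.ball x r) ≤ c * μ (Metric.ball x (2 * r)) := (H r hr h1).1
        _ ≤ c * (c ^ k * μ (Metric.ball x (2 ^ k * (2 * r)))) :=
            mul_le_mul_right (ih (2*r) (by positivity) h2) c
        _ = c ^ (k+1) * μ (Metric.ball x (2 ^ (k+1) * r)) := by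
            rw [← mul_assoc, ← pow_succ']
            congr 2
            ring
  set M : ℝ≥0∞ := μ (Metric.ball x r₀) with hM
  have hMfin : M < ∞ := by
    have := (H (r₀/2) (by positivity) (by linarith)).2
    simpa [mul_div_cancel₀] using this
  set V : ℝ≥0∞ := volume (Metric.ball (0 : EuclideanSpace ℝ (Fin n)) (r₀/4)) with hV
  have hL : 0 < V := by
    rw [hV, ← Measure.addHaar_ball_center volume x]
    exact measure_ball_pos volume x (by positivity)
  set t : ℝ≥0∞ := 2 ^ n * c with ht
  have h2n : ((2:ℝ≥0∞) ^ n) ≠ 0 := by positivity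
  have h2ntop : ((2:ℝ≥0∞) ^ n) ≠ ∞ := ENNReal.pow_ne_top (by norm_num)
  have htlt : t < 1 := by
    rw [ht]
    calc 2 ^ n * c < 2 ^ n * ((2:ℝ≥0∞) ^ n)⁻¹ :=
          ENNReal.mul_lt_mul_right h2n h2ntop hc2
      _ = 1 := ENNReal.mul_inv_cancel h2n h2ntop
  have htend : Tendsto (fun k : ℕ => t ^ k * M) atTop (𝓝 0) := by
    have h0 : Tendsto (fun k : ℕ => t ^ k) atTop (𝓝 0) :=
      ENNReal.tendsto_pow_atTop_nhds_zero_of_lt_one htlt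
    simpa using ENNReal.Tendsto.mul_const h0 (Or.inr hMfin.ne)
  have hεV : 0 < ε * V := ENNReal.mul_pos hε.ne' hL.ne'
  obtain ⟨k₀, hk₀⟩ := ((tendsto_order.1 htend).2 _ hεV).exists
  have hδ : (0:ℝ) < r₀ / 4 / 2 ^ k₀ := by positivity
  filter_upwards [Ioo_mem_nhdsGT_of_mem ⟨le_refl (0:ℝ), hδ⟩] with r hr
  obtain ⟨hr0, hrδ⟩ := hr
  -- `k` is minimal with `r₀ / 4 ≤ 2 ^ k * r`; then `2 ^ k * r ∈ [r₀/4, r₀/2)` and `k > k₀`.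
  have hex : ∃ k : ℕ, r₀ / 4 ≤ 2 ^ k * r := by
    obtain ⟨k, hk⟩ := pow_unbounded_of_one_lt (r₀ / 4 / r) (by norm_num : (1:ℝ) < 2)
    exact ⟨k, ((div_lt_iff₀ hr0).1 hk).le⟩
  set k := Nat.find hex with hkdef
  have hk1 : r₀ / 4 ≤ 2 ^ k * r := Nat.find_spec hex
  have hkk₀ : k₀ < k := by
    by_contra hcon
    push_neg at hcon
    have h2k : (2:ℝ) ^ k * r ≤ 2 ^ k₀ * r :=
      mul_le_mul_of_nonneg_right (pow_le_pow_right₀ (by norm_num) hcon) hr0.le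
    have h2 : 2 ^ k₀ * r < r₀ / 4 := by
      rw [div_div] at hrδ
      calc (2:ℝ) ^ k₀ * r < 2 ^ k₀ * (r₀ / (4 * 2 ^ k₀)) := by gcongr
        _ = r₀ / 4 := by field_simp
    linarith
  have hkpos : 0 < k := lt_of_le_of_lt (Nat.zero_le _) hkk₀
  have hk2 : 2 ^ k * r < r₀ / 2 := by
    have hmin : ¬ (r₀ / 4 ≤ 2 ^ (k-1) * r) := Nat.find_min hex (Nat.sub_lt hkpos one_pos)
    push_neg at hmin
    have : (2:ℝ) ^ k = 2 * 2 ^ (k-1) := by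
      rw [← pow_succ']
      congr 1
      omega
    rw [this]
    nlinarith
  -- main chain: `μ (closedBall x r) ≤ c ^ k * M`
  have hchain : μ (Metric.closedBall x r) ≤ c ^ k * M := by
    have h1 : μ (Metric.closedBall x r) ≤ μ (Metric.ball x (2 * r)) :=
      measure_mono (Metric.closedBall_subset_ball (by linarith))
    have h2 : 2 ^ k * (2 * r) ≤ r₀ := by nlinarith
    have h3 := iter k (2*r) (by positivity) h2
    have h4 : μ (Metric.ball x (2 ^ k * (2 * r))) ≤ M :=
      measure_mono (Metric.ball_subset_ball h2)
    calc μ (Metric.closedBall x r) ≤ μ (Metric.ball x (2*r)) := h1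
      _ ≤ c ^ k * μ (Metric.ball x (2 ^ k * (2 * r))) := h3
      _ ≤ c ^ k * M := mul_le_mul_right h4 _
  -- lower bound for the volume of the ball
  have hrlb : (2:ℝ)⁻¹ ^ k * (r₀/4) ≤ r := by
    rw [inv_pow, inv_mul_le_iff₀ (by positivity)]
    linarith
  have heq : volume (Metric.ball x ((2:ℝ)⁻¹ ^ k * (r₀/4)))
      = ENNReal.ofReal (((2:ℝ)⁻¹ ^ k) ^ n) * V := by
    rw [hV, Measure.addHaar_ball_mul_of_pos volume x (by positivity), finrank_euclideanSpace_fin]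
  have hvlb : ENNReal.ofReal (((2:ℝ)⁻¹ ^ k) ^ n) * V ≤ volume (Metric.closedBall x r) := by
    rw [← heq]
    exact measure_mono ((Metric.ball_subset_ball hrlb).trans Metric.ball_subset_closedBall)
  have hofReal : ENNReal.ofReal (((2:ℝ)⁻¹ ^ k) ^ n) = ((2:ℝ≥0∞) ^ (n*k))⁻¹ := by
    rw [← pow_mul, ENNReal.ofReal_pow (by norm_num), ENNReal.ofReal_inv_of_pos (by norm_num)]
    rw [ENNReal.inv_pow]
    norm_num [mul_comm]
  have hpk0 : ((2:ℝ≥0∞) ^ (n*k)) ≠ 0 := by positivity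
  have hpktop : ((2:ℝ≥0∞) ^ (n*k)) ≠ ∞ := ENNReal.pow_ne_top (by norm_num)
  have hstep : c ^ k * M ≤ ((2:ℝ≥0∞) ^ (n*k))⁻¹ * (ε * V) := by
    have h1 : t ^ k * M ≤ ε * V := by
      refine le_trans (mul_le_mul_left ?_ M) hk₀.le
      exact pow_le_pow_of_le_one zero_le htlt.le hkk₀.le
    have h2 : t ^ k = 2 ^ (n*k) * c ^ k := by rw [ht, mul_pow, ← pow_mul]
    calc c ^ k * M = ((2:ℝ≥0∞) ^ (n*k))⁻¹ * (t ^ k * M) := by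
          rw [h2, ← mul_assoc, ← mul_assoc, ENNReal.inv_mul_cancel hpk0 hpktop, one_mul]
      _ ≤ ((2:ℝ≥0∞) ^ (n*k))⁻¹ * (ε * V) := mul_le_mul_right h1 _
  calc μ (Metric.closedBall x r) ≤ c ^ k * M := hchain
    _ ≤ ((2:ℝ≥0∞) ^ (n*k))⁻¹ * (ε * V) := hstep
    _ = ε * (((2:ℝ≥0∞) ^ (n*k))⁻¹ * V) := by ring
    _ ≤ ε * volume (Metric.closedBall x r) := mul_le_mul_right (by rw [← hofReal]; exact hvlb) ε

/-- The set of points where `μ (closedBall x r)` is eventually smaller than every fixed multiple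
of `volume (closedBall x r)` is `μ`-null. This follows from a Besicovitch covering argument. -/
lemma aux_null {n : ℕ} (μ : Measure (EuclideanSpace ℝ (Fin n)))
    [IsLocallyFiniteMeasure μ] :
    μ {x : EuclideanSpace ℝ (Fin n) | ∀ ε : ℝ≥0, 0 < ε →
      ∀ᶠ r in 𝓝[>] (0 : ℝ),
        μ (Metric.closedBall x r) ≤ (ε : ℝ≥0∞) * volume (Metric.closedBall x r)} = 0 := by
  set T := {x : EuclideanSpace ℝ (Fin n) | ∀ ε : ℝ≥0, 0 < ε →
      ∀ᶠ r in 𝓝[>] (0 : ℝ),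
        μ (Metric.closedBall x r) ≤ (ε : ℝ≥0∞) * volume (Metric.closedBall x r)} with hT
  have hcover : T ⊆ ⋃ m : ℕ, T ∩ Metric.closedBall 0 m := by
    intro x hx
    obtain ⟨m, hm⟩ := exists_nat_ge ‖x‖
    exact Set.mem_iUnion.2 ⟨m, hx, by simpa [Metric.mem_closedBall, dist_zero_right] using hm⟩
  refine measure_mono_null hcover (measure_iUnion_null fun m => ?_)
  set v := Besicovitch.vitaliFamily μ with hv
  set K := Metric.closedBall (0 : EuclideanSpace ℝ (Fin n)) (m : ℝ) with hK
  have hfin : volume K < ∞ := measure_closedBall_lt_top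
  have key : ∀ ε : ℝ≥0, 0 < ε → μ (T ∩ K) ≤ (ε : ℝ≥0∞) * volume K := by
    intro ε hε
    have h := v.measure_le_of_frequently_le (ε • volume) Measure.AbsolutelyContinuous.rfl
      (T ∩ K) ?_
    · refine h.trans ?_
      simp only [Measure.smul_apply, smul_eq_mul, ENNReal.smul_def]
      exact mul_le_mul_right (measure_mono Set.inter_subset_right) _
    · rintro x ⟨hxT, -⟩
      have hev := (hxT ε hε).frequently
      exact (Besicovitch.tendsto_filterAt μ x).frequently
        (p := fun a => μ a ≤ (ε • volume) a) (by
          refine hev.mono fun r hr => ?_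
          simp only [Measure.smul_apply, smul_eq_mul, ENNReal.smul_def]
          exact hr)
  refine le_antisymm (ENNReal.le_of_forall_pos_le_add fun ε hε _ => ?_) zero_le
  rw [zero_add]
  set C : ℝ≥0 := (volume K).toNNReal + 1 with hC
  have hCpos : 0 < C := by positivity
  have hvC : volume K ≤ (C : ℝ≥0∞) := by
    rw [hC, ENNReal.coe_add, ENNReal.coe_toNNReal hfin.ne]
    exact le_self_add
  calc μ (T ∩ K) ≤ ((ε / C : ℝ≥0) : ℝ≥0∞) * volume K := key _ (by positivity)
    _ ≤ ((ε / C : ℝ≥0) : ℝ≥0∞) * (C : ℝ≥0∞) := mul_le_mul_right hvC _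
    _ = ((ε : ℝ≥0∞)) := by
        rw [← ENNReal.coe_mul]
        norm_cast
        exact div_mul_cancel₀ ε hCpos.ne'

/-- Every Radon measure `μ` on `ℝⁿ` is asymptotically doubling in a weak sense
`μ`-a.e.: with
`A_μ = {x ∈ supp μ : limsup_{r→0⁺} μ(B_r(x))/μ(B_{2r}(x)) ≥ 2^{−n}}`,
one has `μ(ℝⁿ \ A_μ) = 0`. -/
theorem measure_asymptotically_doubling {n : ℕ}
    (μ : Measure (EuclideanSpace ℝ (Fin n))) [IsLocallyFiniteMeasure μ] :
    μ ({x : EuclideanSpace ℝ (Fin n) |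
        (∀ r : ℝ, 0 < r → 0 < μ (Metric.ball x r)) ∧
        ((2 : ℝ≥0∞) ^ n)⁻¹ ≤
          Filter.limsup (fun r : ℝ => μ (Metric.ball x r) / μ (Metric.ball x (2 * r)))
            (𝓝[>] (0 : ℝ))}ᶜ) = 0 := by
  have hbad1 : μ {x : EuclideanSpace ℝ (Fin n) |
      ¬ ∀ r : ℝ, 0 < r → 0 < μ (Metric.ball x r)} = 0 := by
    apply measure_null_of_locally_null
    intro x hx
    simp only [mem_setOf_eq] at hx
    push_neg at hx
    obtain ⟨r, hr, hxr⟩ := hx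
    refine ⟨Metric.ball x r, mem_nhdsWithin_of_mem_nhds (Metric.ball_mem_nhds x hr), ?_⟩
    exact le_antisymm hxr zero_le
  have hbad2 := aux_null μ
  apply measure_mono_null ?_ (measure_union_null hbad1 hbad2)
  intro x hx
  simp only [mem_compl_iff, mem_setOf_eq, not_and] at hx
  by_cases hP : ∀ r : ℝ, 0 < r → 0 < μ (Metric.ball x r)
  · right
    intro ε hε
    exact aux_small_density μ x hP (not_le.1 (hx hP)) (ε : ℝ≥0∞) (by exact_mod_cast hε)
  · left
    exact hP
end

section
/- Let ν be a positive Radon measure on the torus 𝕋ⁿ whose singular part ν^s satisfies ν^s(B_r(x)) ≤ N r^δ for some δ > 0, N > 0, all r ∈ (0,1), and all x ∈ 𝕋ⁿ. Then the restricted fractional maximal function 𝑀̃ν^s(x) = sup_{0<R<1} R^{−(n−1)} ν^s(B_R(x)) satisfies ‖𝑀̃ν^s‖_{L^{n/(n−1)}(𝕋ⁿ)} ≤ C(n,δ)(ν^s(𝕋ⁿ) + N). -/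
open MeasureTheory
open scoped ENNReal

lemma aux_volume_ball_le (n : ℕ) (y : Fin n → AddCircle (1:ℝ)) {r : ℝ} (hr : 0 ≤ r) :
    volume (Metric.ball y r) ≤ ENNReal.ofReal (2*r) ^ n := by
  haveI : Fact ((0:ℝ) < 1) := ⟨one_pos⟩
  calc volume (Metric.ball y r) ≤ volume (Metric.closedBall y r) :=
        measure_mono Metric.ball_subset_closedBall
    _ = ∏ i : Fin n, volume (Metric.closedBall (y i) r) := by
        rw [closedBall_pi _ hr, volume_pi_pi]
    _ ≤ ∏ _i : Fin n, ENNReal.ofReal (2*r) := Finset.prod_le_prod' (fun i _ => by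
        rw [AddCircle.volume_closedBall]
        exact ENNReal.ofReal_le_ofReal (min_le_right _ _))
    _ = ENNReal.ofReal (2*r) ^ n := by simp [Finset.prod_const]

lemma aux_measurable_ball (n : ℕ) (ν : Measure (Fin n → AddCircle (1:ℝ))) [SFinite ν] (r : ℝ) :
    Measurable fun x => ν (Metric.ball x r) := by
  have hs : MeasurableSet {p : (Fin n → AddCircle (1:ℝ)) × (Fin n → AddCircle (1:ℝ)) |
      dist p.1 p.2 < r} := (isOpen_lt continuous_dist continuous_const).measurableSet
  have h := measurable_measure_prodMk_left (ν := ν) hs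
  have he : ∀ x : Fin n → AddCircle (1:ℝ), Prod.mk x ⁻¹' {p : (Fin n → AddCircle (1:ℝ)) × (Fin n → AddCircle (1:ℝ)) | dist p.1 p.2 < r} = Metric.ball x r := by
    intro x
    ext y
    simp [Metric.mem_ball, dist_comm]
  simpa only [he] using h

lemma aux_lintegral_ball (n : ℕ) (ν : Measure (Fin n → AddCircle (1:ℝ))) [IsFiniteMeasure ν]
    {r : ℝ} (hr : 0 ≤ r) :
    ∫⁻ x, ν (Metric.ball x r) ≤ ν Set.univ * ENNReal.ofReal (2*r) ^ n := by
  have hs : MeasurableSet {p : (Fin n → AddCircle (1:ℝ)) × (Fin n → AddCircle (1:ℝ)) |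
      dist p.1 p.2 < r} := (isOpen_lt continuous_dist continuous_const).measurableSet
  have h1 : ∫⁻ x, ν (Metric.ball x r) = (volume.prod ν) {p | dist p.1 p.2 < r} := by
    rw [Measure.prod_apply hs]
    refine (lintegral_congr fun x => ?_).symm
    congr 1
    ext y
    simp [Metric.mem_ball, dist_comm]
  have h2 : (volume.prod ν) {p | dist p.1 p.2 < r} = ∫⁻ y, volume (Metric.ball y r) ∂ν := by
    rw [Measure.prod_apply_symm hs]
    refine lintegral_congr fun y => rfl
  rw [h1, h2]
  calc ∫⁻ y, volume (Metric.ball y r) ∂ν ≤ ∫⁻ _y, ENNReal.ofReal (2*r) ^ n ∂ν :=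
        lintegral_mono fun y => aux_volume_ball_le n y hr
    _ = ν Set.univ * ENNReal.ofReal (2*r) ^ n := by rw [lintegral_const]; ring

lemma aux_exists_dyadic {R : ℝ} (h0 : 0 < R) (h1 : R < 1) :
    ∃ k : ℕ, (1/2:ℝ)^(k+1) < R ∧ R ≤ (1/2:ℝ)^k := by
  have hex : ∃ m : ℕ, (1/2:ℝ)^m < R := exists_pow_lt_of_lt_one h0 (by norm_num)
  classical
  have hm0 : (1/2:ℝ)^(Nat.find hex) < R := Nat.find_spec hex
  have hne : Nat.find hex ≠ 0 := by
    intro h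
    rw [h] at hm0
    simp at hm0
    linarith
  obtain ⟨k, hk⟩ := Nat.exists_eq_succ_of_ne_zero hne
  refine ⟨k, ?_, ?_⟩
  · rw [← Nat.succ_eq_add_one, ← hk]; exact hm0
  · have := Nat.find_min hex (m := k) (by omega)
    exact not_lt.mp this

/-- Let `ν` be a positive measure on the torus `𝕋ⁿ` (a singular part) satisfying
`ν(B_r(x)) ≤ N r^δ` for some `δ > 0`, `N > 0`, all `r ∈ (0,1)` and all `x`.  Then the
restricted fractional maximal function `𝑀̃ν(x) = sup_{0<R<1} R^{−(n−1)} ν(B_R(x))`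
satisfies `‖𝑀̃ν‖_{L^{n/(n−1)}(𝕋ⁿ)} ≤ C(n,δ)(ν(𝕋ⁿ) + N)`. -/
theorem fractional_maximal_bound_of_decay (n : ℕ) (hn : 2 ≤ n) (δ : ℝ) (hδ : 0 < δ) :
    ∃ C > (0 : ℝ),
      ∀ (ν : Measure (Fin n → AddCircle (1 : ℝ))) (_ : IsFiniteMeasure ν) (N : ℝ),
        0 < N →
        (∀ (x : Fin n → AddCircle (1 : ℝ)) (r : ℝ), 0 < r → r < 1 →
          (ν (Metric.ball x r)).toReal ≤ N * r ^ δ) →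
        (∫ x : Fin n → AddCircle (1 : ℝ),
            (⨆ R : Set.Ioo (0 : ℝ) 1,
              (ν (Metric.ball x (R : ℝ))).toReal / (R : ℝ) ^ (n - 1))
              ^ ((n : ℝ) / (n - 1))) ^ (((n : ℝ) - 1) / n)
          ≤ C * ((ν Set.univ).toReal + N) := by
  have hn2 : (2:ℝ) ≤ (n:ℝ) := by exact_mod_cast hn
  have hn1' : (0:ℝ) < (n:ℝ) - 1 := by linarith
  have hnpos : (0:ℝ) < (n:ℝ) := by linarith
  set p : ℝ := (n:ℝ) / ((n:ℝ) - 1) with hp_def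
  have hp1 : 1 < p := (one_lt_div hn1').mpr (by linarith)
  have hp0 : 0 < p := by linarith
  have hpm1 : 0 < p - 1 := by linarith
  set a : ℝ := (1/2:ℝ) ^ (δ * (p - 1)) with ha_def
  have ha0 : 0 < a := Real.rpow_pos_of_pos (by norm_num) _
  have ha1 : a < 1 := Real.rpow_lt_one (by norm_num) (by norm_num) (mul_pos hδ hpm1)
  set Dr : ℝ := (2:ℝ) ^ (2*(n:ℝ)) * (1-a)⁻¹ with hDr_def
  have hDr0 : 0 < Dr := mul_pos (Real.rpow_pos_of_pos two_pos _) (inv_pos.mpr (by linarith))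
  refine ⟨Dr ^ (((n:ℝ) - 1) / (n:ℝ)), Real.rpow_pos_of_pos hDr0 _, ?_⟩
  intro ν hfin N hN hdec
  haveI := hfin
  haveI : Nonempty (Set.Ioo (0:ℝ) 1) := ⟨⟨1/2, by norm_num⟩⟩
  set K : ℝ≥0∞ := ν Set.univ + ENNReal.ofReal N with hK_def
  have hK_ne_top : K ≠ ⊤ := ENNReal.add_ne_top.mpr ⟨measure_ne_top ν _, ENNReal.ofReal_ne_top⟩
  have hKpos : 0 < K := lt_of_lt_of_le (ENNReal.ofReal_pos.mpr hN) le_add_self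
  have hK0 : K ≠ 0 := hKpos.ne'
  -- ball measure bound
  have hball_le : ∀ (k : ℕ) (x : Fin n → AddCircle (1:ℝ)),
      ν (Metric.ball x ((1/2:ℝ)^k)) ≤ K * ENNReal.ofReal (((1/2:ℝ)^k) ^ δ) := by
    intro k x
    rcases Nat.eq_zero_or_pos k with hk | hk
    · subst hk
      simp only [pow_zero, Real.one_rpow, ENNReal.ofReal_one, mul_one]
      exact le_trans (measure_mono (Set.subset_univ _)) le_self_add
    · have h1 : (0:ℝ) < (1/2:ℝ)^k := by positivity
      have h2 : ((1/2:ℝ))^k < 1 := pow_lt_one₀ (by norm_num) (by norm_num) hk.ne'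
      have h3 := hdec x _ h1 h2
      have h4 : ν (Metric.ball x ((1/2:ℝ)^k)) ≤ ENNReal.ofReal (N * ((1/2:ℝ)^k) ^ δ) := by
        rw [← ENNReal.ofReal_toReal (measure_ne_top ν _)]
        exact ENNReal.ofReal_le_ofReal h3
      refine h4.trans ?_
      rw [ENNReal.ofReal_mul hN.le]
      exact mul_le_mul_left le_add_self _
  -- the summands
  set c : ℕ → ℝ≥0∞ := fun k => (2:ℝ≥0∞) ^ ((k+1)*(n-1)) with hc_def
  set A : ℕ → (Fin n → AddCircle (1:ℝ)) → ℝ≥0∞ :=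
    fun k x => (c k * ν (Metric.ball x ((1/2:ℝ)^k))) ^ p with hA_def
  have hAmeas : ∀ k, Measurable (A k) :=
    fun k => ENNReal.continuous_rpow_const.measurable.comp
      ((aux_measurable_ball n ν _).const_mul (c k))
  -- pointwise bound
  have hpoint : ∀ x : Fin n → AddCircle (1:ℝ), ENNReal.ofReal
      ((⨆ R : Set.Ioo (0:ℝ) 1, (ν (Metric.ball x (R:ℝ))).toReal / (R:ℝ) ^ (n-1)) ^ p)
      ≤ ∑' k, A k x := by
    intro x
    set M := ⨆ R : Set.Ioo (0:ℝ) 1, (ν (Metric.ball x (R:ℝ))).toReal / (R:ℝ)^(n-1) with hM_def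
    have hg0 : ∀ R : Set.Ioo (0:ℝ) 1, 0 ≤ (ν (Metric.ball x (R:ℝ))).toReal / (R:ℝ)^(n-1) :=
      fun R => div_nonneg ENNReal.toReal_nonneg (pow_nonneg R.2.1.le _)
    have hM0 : 0 ≤ M := Real.iSup_nonneg hg0
    have hgle : ∀ R : Set.Ioo (0:ℝ) 1,
        ENNReal.ofReal ((ν (Metric.ball x (R:ℝ))).toReal / (R:ℝ)^(n-1))
          ≤ (∑' k, A k x) ^ (1/p) := by
      intro R
      obtain ⟨k, hk1, hk2⟩ := aux_exists_dyadic R.2.1 R.2.2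
      have hb1 : (ν (Metric.ball x (R:ℝ))).toReal / (R:ℝ)^(n-1)
          ≤ (2:ℝ)^((k+1)*(n-1)) * (ν (Metric.ball x ((1/2:ℝ)^k))).toReal := by
        have hmono : (ν (Metric.ball x (R:ℝ))).toReal
            ≤ (ν (Metric.ball x ((1/2:ℝ)^k))).toReal :=
          ENNReal.toReal_mono (measure_ne_top ν _) (measure_mono (Metric.ball_subset_ball hk2))
        have hden : ((1/2:ℝ)^(k+1))^(n-1) ≤ (R:ℝ)^(n-1) :=
          pow_le_pow_left₀ (by positivity) hk1.le _
        have hdenpos : (0:ℝ) < ((1/2:ℝ)^(k+1))^(n-1) := by positivity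
        calc (ν (Metric.ball x (R:ℝ))).toReal / (R:ℝ)^(n-1)
            ≤ (ν (Metric.ball x ((1/2:ℝ)^k))).toReal / ((1/2:ℝ)^(k+1))^(n-1) :=
              div_le_div₀ ENNReal.toReal_nonneg hmono hdenpos hden
          _ = (2:ℝ)^((k+1)*(n-1)) * (ν (Metric.ball x ((1/2:ℝ)^k))).toReal := by
              rw [← pow_mul, div_eq_mul_inv, mul_comm]
              congr 1
              rw [one_div, inv_pow, inv_inv]
      have hb2 : ENNReal.ofReal ((ν (Metric.ball x (R:ℝ))).toReal / (R:ℝ)^(n-1))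
          ≤ c k * ν (Metric.ball x ((1/2:ℝ)^k)) := by
        refine (ENNReal.ofReal_le_ofReal hb1).trans ?_
        rw [ENNReal.ofReal_mul (by positivity), ENNReal.ofReal_toReal (measure_ne_top ν _)]
        refine mul_le_mul_left (le_of_eq ?_) _
        rw [ENNReal.ofReal_pow (by norm_num), hc_def]
        norm_num
      have hb3 : c k * ν (Metric.ball x ((1/2:ℝ)^k)) = (A k x) ^ (1/p) := by
        simp only [hA_def]
        rw [← ENNReal.rpow_mul, mul_one_div, div_self hp0.ne', ENNReal.rpow_one]
      rw [hb3] at hb2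
      exact hb2.trans (ENNReal.rpow_le_rpow (ENNReal.le_tsum k) (by positivity))
    rcases eq_or_ne (∑' k, A k x) ⊤ with hS | hS
    · rw [hS]; exact le_top
    · have hT : (∑' k, A k x) ^ (1/p) ≠ ⊤ :=
        ENNReal.rpow_ne_top_of_nonneg (by positivity) hS
      have hMT : M ≤ ((∑' k, A k x) ^ (1/p)).toReal := by
        refine ciSup_le fun R => ?_
        have h2 := ENNReal.toReal_mono hT (hgle R)
        rwa [ENNReal.toReal_ofReal (hg0 R)] at h2
      calc ENNReal.ofReal (M ^ p) = ENNReal.ofReal M ^ p :=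
            (ENNReal.ofReal_rpow_of_nonneg hM0 hp0.le).symm
        _ ≤ ((∑' k, A k x) ^ (1/p)) ^ p := by
            refine ENNReal.rpow_le_rpow ?_ hp0.le
            calc ENNReal.ofReal M ≤ ENNReal.ofReal (((∑' k, A k x) ^ (1/p)).toReal) :=
                  ENNReal.ofReal_le_ofReal hMT
              _ = (∑' k, A k x) ^ (1/p) := ENNReal.ofReal_toReal hT
        _ = ∑' k, A k x := by
            rw [← ENNReal.rpow_mul, one_div_mul_cancel hp0.ne', ENNReal.rpow_one]
  -- exponent computations
  have hckF : ∀ k : ℕ, c k ^ p * ENNReal.ofReal (2*(1/2:ℝ)^k) ^ n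
      = (2:ℝ≥0∞) ^ (2*(n:ℝ)) := by
    intro k
    have e1 : c k = (2:ℝ≥0∞) ^ ((((k+1)*(n-1) : ℕ)) : ℝ) := by
      rw [hc_def]; exact (ENNReal.rpow_natCast 2 _).symm
    have e2r : (2:ℝ) * (1/2:ℝ)^k = (2:ℝ) ^ ((1:ℝ) - (k:ℝ)) := by
      rw [Real.rpow_sub two_pos, Real.rpow_one, Real.rpow_natCast, div_pow, one_pow,
        mul_one_div]
    have e2 : ENNReal.ofReal (2*(1/2:ℝ)^k) = (2:ℝ≥0∞) ^ ((1:ℝ) - (k:ℝ)) := by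
      rw [e2r, ← ENNReal.ofReal_rpow_of_pos two_pos]
      norm_num
    rw [e1, e2, ← ENNReal.rpow_natCast ((2:ℝ≥0∞) ^ ((1:ℝ) - (k:ℝ))) n,
        ← ENNReal.rpow_mul, ← ENNReal.rpow_mul,
        ← ENNReal.rpow_add _ _ two_ne_zero ENNReal.ofNat_ne_top]
    congr 1
    rw [hp_def]
    push_cast [Nat.cast_sub (by omega : 1 ≤ n)]
    field_simp
    ring
  have hE : ∀ k : ℕ, ENNReal.ofReal (((1/2:ℝ)^k) ^ δ) ^ (p-1) = ENNReal.ofReal (a ^ k) := by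
    intro k
    rw [ENNReal.ofReal_rpow_of_pos (by positivity)]
    congr 1
    rw [ha_def, ← Real.rpow_natCast (1/2:ℝ) k,
      ← Real.rpow_mul (by norm_num : (0:ℝ) ≤ 1/2),
      ← Real.rpow_mul (by norm_num : (0:ℝ) ≤ 1/2),
      ← Real.rpow_natCast ((1/2:ℝ) ^ (δ*(p-1))) k,
      ← Real.rpow_mul (by norm_num : (0:ℝ) ≤ 1/2)]
    congr 1
    ring
  have hKpow : K ^ (p-1) * K = K ^ p := by
    have h := ENNReal.rpow_add (p-1) 1 hK0 hK_ne_top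
    rw [ENNReal.rpow_one] at h
    rw [← h]
    congr 1
    ring
  -- per-term integral bound
  have hterm : ∀ k : ℕ, ∫⁻ x, A k x
      ≤ K ^ p * (2:ℝ≥0∞) ^ (2*(n:ℝ)) * ENNReal.ofReal (a ^ k) := by
    intro k
    have hc_ne : c k ≠ ⊤ := by
      rw [hc_def]
      exact ENNReal.pow_ne_top ENNReal.ofNat_ne_top
    have hconst_ne : c k ^ p * (K * ENNReal.ofReal (((1/2:ℝ)^k) ^ δ)) ^ (p-1) ≠ ⊤ :=
      ENNReal.mul_ne_top (ENNReal.rpow_ne_top_of_nonneg hp0.le hc_ne)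
        (ENNReal.rpow_ne_top_of_nonneg hpm1.le
          (ENNReal.mul_ne_top hK_ne_top ENNReal.ofReal_ne_top))
    have hAle : ∀ x, A k x ≤ (c k ^ p * (K * ENNReal.ofReal (((1/2:ℝ)^k) ^ δ)) ^ (p-1)) *
        ν (Metric.ball x ((1/2:ℝ)^k)) := by
      intro x
      simp only [hA_def]
      rw [ENNReal.mul_rpow_of_nonneg _ _ hp0.le, mul_assoc]
      refine mul_le_mul_right ?_ _
      rcases eq_or_ne (ν (Metric.ball x ((1/2:ℝ)^k))) 0 with h0 | h0
      · rw [h0, ENNReal.zero_rpow_of_pos hp0]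
        exact zero_le
      · have hsplit : ν (Metric.ball x ((1/2:ℝ)^k)) ^ p
            = ν (Metric.ball x ((1/2:ℝ)^k)) ^ (p-1) * ν (Metric.ball x ((1/2:ℝ)^k)) := by
          have h := ENNReal.rpow_add (p-1) 1 h0 (measure_ne_top ν _)
          rw [ENNReal.rpow_one] at h
          rw [← h]
          congr 1
          ring
        rw [hsplit]
        exact mul_le_mul_left (ENNReal.rpow_le_rpow (hball_le k x) hpm1.le) _
    calc ∫⁻ x, A k x
        ≤ ∫⁻ x, (c k ^ p * (K * ENNReal.ofReal (((1/2:ℝ)^k) ^ δ)) ^ (p-1)) *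
          ν (Metric.ball x ((1/2:ℝ)^k)) := lintegral_mono hAle
      _ = (c k ^ p * (K * ENNReal.ofReal (((1/2:ℝ)^k) ^ δ)) ^ (p-1)) *
          ∫⁻ x, ν (Metric.ball x ((1/2:ℝ)^k)) := lintegral_const_mul' _ _ hconst_ne
      _ ≤ (c k ^ p * (K * ENNReal.ofReal (((1/2:ℝ)^k) ^ δ)) ^ (p-1)) *
          (ν Set.univ * ENNReal.ofReal (2*(1/2:ℝ)^k) ^ n) :=
          mul_le_mul_right (aux_lintegral_ball n ν (by positivity)) _
      _ ≤ (c k ^ p * (K * ENNReal.ofReal (((1/2:ℝ)^k) ^ δ)) ^ (p-1)) *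
          (K * ENNReal.ofReal (2*(1/2:ℝ)^k) ^ n) := by
          gcongr
          exact le_self_add
      _ = (K ^ (p-1) * K) * ((c k ^ p) * ENNReal.ofReal (2*(1/2:ℝ)^k) ^ n) *
          ENNReal.ofReal (((1/2:ℝ)^k) ^ δ) ^ (p-1) := by
          rw [ENNReal.mul_rpow_of_nonneg _ _ hpm1.le]
          ring
      _ = K ^ p * (2:ℝ≥0∞) ^ (2*(n:ℝ)) * ENNReal.ofReal (a ^ k) := by
          rw [hKpow, hckF k, hE k]
  -- sum up
  have hsum : ∑' k : ℕ, ENNReal.ofReal (a ^ k) = ENNReal.ofReal ((1-a)⁻¹) := by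
    rw [← ENNReal.ofReal_tsum_of_nonneg (fun k => by positivity)
      (summable_geometric_of_lt_one ha0.le ha1), tsum_geometric_of_lt_one ha0.le ha1]
  have hlint : ∫⁻ x, ENNReal.ofReal
      ((⨆ R : Set.Ioo (0:ℝ) 1, (ν (Metric.ball x (R:ℝ))).toReal / (R:ℝ) ^ (n-1)) ^ p)
      ≤ K ^ p * (2:ℝ≥0∞) ^ (2*(n:ℝ)) * ENNReal.ofReal ((1-a)⁻¹) := by
    calc (∫⁻ x, ENNReal.ofReal
        ((⨆ R : Set.Ioo (0:ℝ) 1, (ν (Metric.ball x (R:ℝ))).toReal / (R:ℝ) ^ (n-1)) ^ p))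
        ≤ ∫⁻ x, ∑' k, A k x := lintegral_mono hpoint
      _ = ∑' k, ∫⁻ x, A k x := lintegral_tsum (fun k => (hAmeas k).aemeasurable)
      _ ≤ ∑' k, K ^ p * (2:ℝ≥0∞) ^ (2*(n:ℝ)) * ENNReal.ofReal (a ^ k) :=
          ENNReal.tsum_le_tsum hterm
      _ = K ^ p * (2:ℝ≥0∞) ^ (2*(n:ℝ)) * ENNReal.ofReal ((1-a)⁻¹) := by
          rw [ENNReal.tsum_mul_left, hsum]
  -- finish
  have hf0 : ∀ x : Fin n → AddCircle (1:ℝ), 0 ≤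
      (⨆ R : Set.Ioo (0:ℝ) 1, (ν (Metric.ball x (R:ℝ))).toReal / (R:ℝ) ^ (n-1)) ^ p :=
    fun x => Real.rpow_nonneg (Real.iSup_nonneg
      (fun R => div_nonneg ENNReal.toReal_nonneg (pow_nonneg R.2.1.le _))) _
  have hKr0 : 0 < (ν Set.univ).toReal + N :=
    add_pos_of_nonneg_of_pos ENNReal.toReal_nonneg hN
  have hKtoReal : K.toReal = (ν Set.univ).toReal + N := by
    rw [hK_def, ENNReal.toReal_add (measure_ne_top ν _) ENNReal.ofReal_ne_top,
      ENNReal.toReal_ofReal hN.le]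
  have hB_ne : K ^ p * (2:ℝ≥0∞) ^ (2*(n:ℝ)) * ENNReal.ofReal ((1-a)⁻¹) ≠ ⊤ :=
    ENNReal.mul_ne_top (ENNReal.mul_ne_top
      (ENNReal.rpow_ne_top_of_nonneg hp0.le hK_ne_top)
      (ENNReal.rpow_ne_top_of_nonneg (by positivity) ENNReal.ofNat_ne_top))
      ENNReal.ofReal_ne_top
  have hBtoReal : (K ^ p * (2:ℝ≥0∞) ^ (2*(n:ℝ)) * ENNReal.ofReal ((1-a)⁻¹)).toReal
      = ((ν Set.univ).toReal + N) ^ p * Dr := by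
    rw [ENNReal.toReal_mul, ENNReal.toReal_mul, ← ENNReal.toReal_rpow, ← ENNReal.toReal_rpow,
      hKtoReal, ENNReal.toReal_ofReal (inv_nonneg.mpr (by linarith : (0:ℝ) ≤ 1-a)), hDr_def]
    norm_num
    ring
  by_cases hInt : Integrable (fun x : Fin n → AddCircle (1:ℝ) =>
      (⨆ R : Set.Ioo (0:ℝ) 1, (ν (Metric.ball x (R:ℝ))).toReal / (R:ℝ) ^ (n-1)) ^ p) volume
  · have h1 : (∫ x : Fin n → AddCircle (1:ℝ),
        (⨆ R : Set.Ioo (0:ℝ) 1, (ν (Metric.ball x (R:ℝ))).toReal / (R:ℝ) ^ (n-1)) ^ p)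
        ≤ ((ν Set.univ).toReal + N) ^ p * Dr := by
      rw [integral_eq_lintegral_of_nonneg_ae (Filter.Eventually.of_forall hf0)
        hInt.aestronglyMeasurable]
      rw [← hBtoReal]
      exact ENNReal.toReal_mono hB_ne hlint
    calc (∫ x : Fin n → AddCircle (1:ℝ),
          (⨆ R : Set.Ioo (0:ℝ) 1, (ν (Metric.ball x (R:ℝ))).toReal / (R:ℝ) ^ (n-1)) ^ p)
          ^ (((n:ℝ) - 1) / (n:ℝ))
        ≤ (((ν Set.univ).toReal + N) ^ p * Dr) ^ (((n:ℝ) - 1) / (n:ℝ)) :=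
          Real.rpow_le_rpow (integral_nonneg hf0) h1 (by positivity)
      _ = Dr ^ (((n:ℝ) - 1) / (n:ℝ)) * ((ν Set.univ).toReal + N) := by
          rw [Real.mul_rpow (by positivity) hDr0.le, ← Real.rpow_mul hKr0.le]
          have hone : p * (((n:ℝ) - 1) / (n:ℝ)) = 1 := by
            rw [hp_def]
            field_simp
          rw [hone, Real.rpow_one, mul_comm]
  · rw [integral_undef hInt, Real.zero_rpow (by positivity : ((n:ℝ) - 1) / (n:ℝ) ≠ 0)]
    exact le_of_lt (mul_pos (Real.rpow_pos_of_pos hDr0 _) hKr0)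
end

section
/- Let α and β be Radon measures on ℝⁿ with α ⟂ β (mutually singular). Then for β-almost every x, lim_{r→0⁺} α(B̄_r(x))/β(B̄_r(x)) = 0, and α is concentrated on the union of the complement of supp(β) and the set where liminf_{r→0⁺} α(B̄_r(x))/β(B̄_r(x)) = +∞. -/
open MeasureTheory Filter
open scoped ENNReal Topology

/-- Let `α ⟂ β` be mutually singular Radon measures on `ℝⁿ`.  Then for `β`-a.e. `x`,
`lim_{r→0⁺} α(B̄_r(x))/β(B̄_r(x)) = 0`, and `α` is concentrated on the union of the
complement of `supp β` and the set where `liminf_{r→0⁺} α(B̄_r(x))/β(B̄_r(x)) = +∞`. -/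
theorem mutually_singular_density_zero {n : ℕ}
    (α β : Measure (EuclideanSpace ℝ (Fin n)))
    [IsLocallyFiniteMeasure α] [IsLocallyFiniteMeasure β]
    (h : α.MutuallySingular β) :
    (∀ᵐ x ∂β,
      Tendsto (fun r : ℝ => α (Metric.closedBall x r) / β (Metric.closedBall x r))
        (𝓝[>] (0 : ℝ)) (𝓝 0)) ∧
    α ({x : EuclideanSpace ℝ (Fin n) |
        (∃ r : ℝ, 0 < r ∧ β (Metric.ball x r) = 0) ∨
        Filter.liminf
          (fun r : ℝ => α (Metric.closedBall x r) / β (Metric.closedBall x r))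
          (𝓝[>] (0 : ℝ)) = ⊤}ᶜ) = 0 := by
  constructor
  · filter_upwards [Besicovitch.ae_tendsto_rnDeriv α β, h.rnDeriv_ae_eq_zero] with x hx h0
    rw [h0] at hx
    exact hx
  · have key : ∀ᵐ x ∂α,
        (∃ r : ℝ, 0 < r ∧ β (Metric.ball x r) = 0) ∨
        Filter.liminf
          (fun r : ℝ => α (Metric.closedBall x r) / β (Metric.closedBall x r))
          (𝓝[>] (0 : ℝ)) = ⊤ := by
      filter_upwards [Besicovitch.ae_tendsto_rnDeriv β α, h.symm.rnDeriv_ae_eq_zero]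
        with x hx h0
      rw [h0] at hx
      by_cases hsupp : ∃ r : ℝ, 0 < r ∧ β (Metric.ball x r) = 0
      · exact Or.inl hsupp
      right
      push_neg at hsupp
      -- β of all small closed balls is positive
      have hβpos : ∀ r : ℝ, 0 < r → 0 < β (Metric.closedBall x r) := fun r hr =>
        lt_of_lt_of_le (pos_iff_ne_zero.2 (hsupp r hr)) (measure_mono Metric.ball_subset_closedBall)
      -- α of small closed balls is finite
      obtain ⟨s, hs, hsfin⟩ := (α.finiteAt_nhds x).exists_mem_basis (Metric.nhds_basis_closedBall)
      have hev : ∀ᶠ r in 𝓝[>] (0 : ℝ),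
          α (Metric.closedBall x r) / β (Metric.closedBall x r) =
            (β (Metric.closedBall x r) / α (Metric.closedBall x r))⁻¹ := by
        filter_upwards [Ioc_mem_nhdsGT_of_mem ⟨le_rfl, hs⟩] with r hr
        have hfin : α (Metric.closedBall x r) ≠ ∞ :=
          ((measure_mono (Metric.closedBall_subset_closedBall hr.2)).trans_lt hsfin).ne
        rw [ENNReal.inv_div (Or.inl hfin) (Or.inr (hβpos r hr.1).ne')]
      have htop : Tendsto
          (fun r : ℝ => α (Metric.closedBall x r) / β (Metric.closedBall x r))
          (𝓝[>] (0 : ℝ)) (𝓝 ⊤) := by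
        refine Tendsto.congr' (EventuallyEq.symm hev) ?_
        simpa using (ENNReal.tendsto_inv_iff.2 hx : Tendsto _ _ (𝓝 (0:ℝ≥0∞)⁻¹))
      exact htop.liminf_eq
    rw [Set.compl_setOf]
    exact key
end
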